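/- arXiv:1003.2649 — 2 statements merged into one kernel-verified Lean document; each statement's English description precedes it below -/
import Mathlib

section
/- Let (p_k)_{k≥0} be a weakly ergodic sequence of stochastic matrices on a nonempty finite set S. Then for every m ≥ 0 there exists n ≥ m such that α(∏_{k=m}^{n} p_k) ≥ 1/2; consequently, there exists a strictly increasing sequence of positive integers (n_k)_{k≥0} such that Σ_{k=0}^∞ α(∏_{i=n_k}^{n_{k+1}−1} p_i) = +∞. -/
open Filter

/-- A stochastic matrix on a finite set `S`: nonnegative entries, each row sums to 1. -/
def IsStochastic {S : Type*} [Fintype S] (p : Matrix S S ℝ) : Prop :=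
  (∀ i j, 0 ≤ p i j) ∧ ∀ i, ∑ j, p i j = 1

/-- Doeblin's ergodicity coefficient `α(p) = Σ_j min_i p(i,j)`. -/
noncomputable def doeblin {S : Type*} [Fintype S] [Nonempty S] (p : Matrix S S ℝ) : ℝ :=
  ∑ j, Finset.univ.inf' Finset.univ_nonempty fun i => p i j

/-- The ordered matrix product `p_m * p_{m+1} * ⋯ * p_n`. -/
noncomputable def prodFromTo {S : Type*} [Fintype S] [DecidableEq S]
    (p : ℕ → Matrix S S ℝ) (m n : ℕ) : Matrix S S ℝ :=
  ((List.range (n + 1 - m)).map fun k => p (m + k)).prod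

/-- Weak ergodicity of a sequence of stochastic matrices. -/
def WeaklyErgodic {S : Type*} [Fintype S] [DecidableEq S] (p : ℕ → Matrix S S ℝ) : Prop :=
  ∀ (m : ℕ) (i j s : S),
    Tendsto (fun n => |prodFromTo p m n i s - prodFromTo p m n j s|) atTop (nhds 0)

lemma isStochastic_one {S : Type*} [Fintype S] [DecidableEq S] :
    IsStochastic (1 : Matrix S S ℝ) := by
  constructor
  · intro i j
    by_cases h : i = j <;> simp [Matrix.one_apply, h]
  · intro i
    simp [Matrix.one_apply]

lemma isStochastic_mul {S : Type*} [Fintype S] {a b : Matrix S S ℝ}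
    (ha : IsStochastic a) (hb : IsStochastic b) : IsStochastic (a * b) := by
  constructor
  · intro i j
    exact Finset.sum_nonneg fun k _ => mul_nonneg (ha.1 i k) (hb.1 k j)
  · intro i
    simp only [Matrix.mul_apply]
    rw [Finset.sum_comm]
    simp_rw [← Finset.mul_sum, hb.2, mul_one]
    exact ha.2 i

lemma isStochastic_listProd {S : Type*} [Fintype S] [DecidableEq S]
    (l : List (Matrix S S ℝ)) (h : ∀ x ∈ l, IsStochastic x) : IsStochastic l.prod := by
  induction l with
  | nil => simpa using isStochastic_one
  | cons a l ih =>
    simp only [List.prod_cons]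
    exact isStochastic_mul (h a (by simp)) (ih fun x hx => h x (by simp [hx]))

lemma isStochastic_prodFromTo {S : Type*} [Fintype S] [DecidableEq S]
    (p : ℕ → Matrix S S ℝ) (hp : ∀ k, IsStochastic (p k)) (m n : ℕ) :
    IsStochastic (prodFromTo p m n) := by
  apply isStochastic_listProd
  intro x hx
  simp only [List.mem_map] at hx
  obtain ⟨k, -, rfl⟩ := hx
  exact hp _

theorem weak_ergodicity_implies_doeblin_divergence {S : Type*} [Fintype S] [Nonempty S]
    [DecidableEq S]
    (p : ℕ → Matrix S S ℝ) (hp : ∀ k, IsStochastic (p k))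
    (herg : WeaklyErgodic p) :
    (∀ m : ℕ, ∃ n, m ≤ n ∧ (1 / 2 : ℝ) ≤ doeblin (prodFromTo p m n)) ∧
    ∃ nseq : ℕ → ℕ, StrictMono nseq ∧ (∀ k, 0 < nseq k) ∧
      Tendsto
        (fun N => ∑ k ∈ Finset.range N, doeblin (prodFromTo p (nseq k) (nseq (k + 1) - 1)))
        atTop atTop := by
  have hcard : (0 : ℝ) < Fintype.card S := by
    exact_mod_cast Fintype.card_pos
  set ε : ℝ := 1 / (2 * Fintype.card S) with hε
  have hεpos : 0 < ε := by positivity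
  have part1 : ∀ m : ℕ, ∃ n, m ≤ n ∧ (1 / 2 : ℝ) ≤ doeblin (prodFromTo p m n) := by
    intro m
    have hev : ∀ᶠ n in atTop, ∀ i j s : S,
        |prodFromTo p m n i s - prodFromTo p m n j s| < ε := by
      rw [eventually_all]
      intro i
      rw [eventually_all]
      intro j
      rw [eventually_all]
      intro s
      exact (herg m i j s).eventually_lt_const hεpos
    obtain ⟨n, hev, hmn⟩ := (hev.and (eventually_ge_atTop m)).exists
    refine ⟨n, hmn, ?_⟩
    obtain ⟨i0⟩ := ‹Nonempty S›
    have hstoch := isStochastic_prodFromTo p hp m n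
    have key : ∀ j : S,
        prodFromTo p m n i0 j - ε ≤
          Finset.univ.inf' Finset.univ_nonempty fun i => prodFromTo p m n i j := by
      intro j
      obtain ⟨i, -, hi⟩ := Finset.exists_mem_eq_inf' (Finset.univ_nonempty)
        (fun i => prodFromTo p m n i j)
      rw [hi]
      have := hev i0 i j
      have h1 : prodFromTo p m n i0 j - prodFromTo p m n i j ≤ ε :=
        (le_abs_self _).trans this.le
      linarith
    have hcε : (Fintype.card S : ℝ) * ε = 1 / 2 := by
      rw [hε]; field_simp
    calc (1 / 2 : ℝ) = 1 - Fintype.card S * ε := by linarith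
      _ = ∑ j : S, (prodFromTo p m n i0 j - ε) := by
          rw [Finset.sum_sub_distrib, hstoch.2 i0, Finset.sum_const, Finset.card_univ,
            nsmul_eq_mul]
      _ ≤ doeblin (prodFromTo p m n) := Finset.sum_le_sum fun j _ => key j
  refine ⟨part1, ?_⟩
  choose f hf1 hf2 using part1
  set nseq : ℕ → ℕ := fun k => Nat.rec 1 (fun _ prev => f prev + 1) k with hnseq
  have hsucc : ∀ k, nseq (k + 1) = f (nseq k) + 1 := fun k => rfl
  have hmono : StrictMono nseq := by
    apply strictMono_nat_of_lt_succ
    intro k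
    rw [hsucc]
    exact Nat.lt_succ_of_le (hf1 _)
  have hpos : ∀ k, 0 < nseq k := by
    intro k
    cases k with
    | zero => exact Nat.one_pos
    | succ k => rw [hsucc]; exact Nat.succ_pos _
  refine ⟨nseq, hmono, hpos, ?_⟩
  have hterm : ∀ k, (1 / 2 : ℝ) ≤ doeblin (prodFromTo p (nseq k) (nseq (k + 1) - 1)) := by
    intro k
    rw [hsucc]
    simpa using hf2 (nseq k)
  have hlb : ∀ N : ℕ, (N : ℝ) * (1 / 2) ≤
      ∑ k ∈ Finset.range N, doeblin (prodFromTo p (nseq k) (nseq (k + 1) - 1)) := by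
    intro N
    calc (N : ℝ) * (1 / 2) = ∑ _k ∈ Finset.range N, (1 / 2 : ℝ) := by
          simp [mul_comm]
      _ ≤ _ := Finset.sum_le_sum fun k _ => hterm k
  exact tendsto_atTop_mono hlb
    (Tendsto.atTop_mul_const (by norm_num) tendsto_natCast_atTop_atTop)
end

section
/- Let S be a nonempty finite set, μ a probability distribution on S (viewed as a row vector), α ∈ (0,1], E ∈ ℰ with common row e, M ∈ 𝒫, and p = α·E + (1−α)·M a stochastic matrix. Fix m ≥ 0 and define the mixture distribution ν = Σ_{t=0}^{m} w_t · e·M^t, where w_t = α(1−α)^t / (1 − (1−α)^{m+1}). Then for all n > m, the total variation distance between the distribution μ·p^n of X_n and ν satisfies (1/2)·Σ_{s∈S} |(μ·p^n)(s) − ν(s)| ≤ (1−α)^{m+1}. -/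
set_option linter.unusedSectionVars false

section Helpers
variable {S : Type*} [Fintype S] [DecidableEq S]

lemma vecMul_apply' (u : S → ℝ) (A : Matrix S S ℝ) (s : S) :
    Matrix.vecMul u A s = ∑ i, u i * A i s := by
  simp [Matrix.vecMul, dotProduct]

lemma stoch_mul {A B : Matrix S S ℝ} (hA : IsStochastic A) (hB : IsStochastic B) :
    IsStochastic (A * B) := by
  constructor
  · intro i j
    rw [Matrix.mul_apply]
    exact Finset.sum_nonneg fun k _ => mul_nonneg (hA.1 i k) (hB.1 k j)
  · intro i
    simp only [Matrix.mul_apply]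
    rw [Finset.sum_comm]
    calc ∑ k, ∑ j, A i k * B k j = ∑ k, A i k * ∑ j, B k j := by
          simp [Finset.mul_sum]
      _ = 1 := by simp [hB.2, hA.2 i]

lemma stoch_one : IsStochastic (1 : Matrix S S ℝ) := by
  constructor
  · intro i j
    by_cases h : i = j <;> simp [Matrix.one_apply, h]
  · intro i; simp [Matrix.one_apply]

lemma stoch_pow {M : Matrix S S ℝ} (hM : IsStochastic M) (n : ℕ) :
    IsStochastic (M ^ n) := by
  induction n with
  | zero => simpa using stoch_one
  | succ n ih => rw [pow_succ]; exact stoch_mul ih hM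

lemma dist_vecMul {A : Matrix S S ℝ} (hA : IsStochastic A) {u : S → ℝ}
    (hu0 : ∀ s, 0 ≤ u s) (hu1 : ∑ s, u s = 1) :
    (∀ s, 0 ≤ Matrix.vecMul u A s) ∧ ∑ s, Matrix.vecMul u A s = 1 := by
  constructor
  · intro s
    rw [vecMul_apply']
    exact Finset.sum_nonneg fun i _ => mul_nonneg (hu0 i) (hA.1 i s)
  · simp only [vecMul_apply']
    rw [Finset.sum_comm]
    calc ∑ i, ∑ s, u i * A i s = ∑ i, u i * ∑ s, A i s := by simp [Finset.mul_sum]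
      _ = 1 := by simp [hA.2, hu1]

end Helpers

/-- The distribution of `X_n` is, for `n > m`, within `(1 - α)^(m+1)` in total variation
distance of the mixture `Σ_{t=0}^m (α (1-α)^t / (1 - (1-α)^(m+1))) • e M^t`. -/
theorem tv_bound_mixture
    {S : Type*} [Fintype S] [Nonempty S] [DecidableEq S]
    (μ e : S → ℝ) (hμ0 : ∀ s, 0 ≤ μ s) (hμ1 : ∑ s, μ s = 1)
    (he0 : ∀ s, 0 ≤ e s) (he1 : ∑ s, e s = 1)
    (α : ℝ) (hα0 : 0 < α) (hα1 : α ≤ 1)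
    (E M p : Matrix S S ℝ)
    (hE : IsStochastic E) (hEe : ∀ i j, E i j = e j)
    (hM : IsStochastic M)
    (hp : p = α • E + (1 - α) • M)
    (m : ℕ) :
    ∀ n > m,
      (1 / 2 : ℝ) * ∑ s, |Matrix.vecMul μ (p ^ n) s -
          ∑ t ∈ Finset.range (m + 1),
            (α * (1 - α) ^ t / (1 - (1 - α) ^ (m + 1))) * Matrix.vecMul e (M ^ t) s| ≤
        (1 - α) ^ (m + 1) := by
  intro n hn
  set β : ℝ := 1 - α with hβdef
  have hβ0 : (0:ℝ) ≤ β := by rw [hβdef]; linarith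
  have hβ1 : β < 1 := by rw [hβdef]; linarith
  have hαβ : (1:ℝ) - β = α := by rw [hβdef]; ring
  set Z : ℝ := 1 - β ^ (m + 1) with hZdef
  have hβm1 : β ^ (m + 1) < 1 := pow_lt_one₀ hβ0 hβ1 (Nat.succ_ne_zero m)
  have hβm0 : (0:ℝ) ≤ β ^ (m + 1) := pow_nonneg hβ0 _
  have hZ0 : 0 < Z := by rw [hZdef]; linarith
  have hZ1 : Z ≤ 1 := by rw [hZdef]; linarith
  -- p is stochastic
  have hpS : IsStochastic p := by
    constructor
    · intro i j
      rw [hp]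
      simp only [Matrix.add_apply, Matrix.smul_apply, smul_eq_mul]
      have h1 := hE.1 i j
      have h2 := hM.1 i j
      have : (0:ℝ) ≤ 1 - α := hβ0
      positivity
    · intro i
      rw [hp]
      simp only [Matrix.add_apply, Matrix.smul_apply, smul_eq_mul]
      rw [Finset.sum_add_distrib, ← Finset.mul_sum, ← Finset.mul_sum, hE.2 i, hM.2 i]
      ring
  -- facts about the distributions e M^t and μ M^t
  have hf : ∀ t : ℕ, (∀ s, 0 ≤ Matrix.vecMul e (M ^ t) s) ∧
      ∑ s, Matrix.vecMul e (M ^ t) s = 1 := fun t => dist_vecMul (stoch_pow hM t) he0 he1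
  have hg : ∀ t : ℕ, (∀ s, 0 ≤ Matrix.vecMul μ (M ^ t) s) ∧
      ∑ s, Matrix.vecMul μ (M ^ t) s = 1 := fun t => dist_vecMul (stoch_pow hM t) hμ0 hμ1
  -- key identity
  have key : ∀ k : ℕ, ∀ s, Matrix.vecMul μ (p ^ k) s =
      (∑ t ∈ Finset.range k, α * β ^ t * Matrix.vecMul e (M ^ t) s)
        + β ^ k * Matrix.vecMul μ (M ^ k) s := by
    intro k
    induction k with
    | zero => intro s; simp
    | succ k ih =>
      intro s
      have hdist := dist_vecMul (stoch_pow hpS k) hμ0 hμ1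
      have hps : ∀ i, p i s = α * e s + β * M i s := by
        intro i
        rw [hp]
        simp only [Matrix.add_apply, Matrix.smul_apply, smul_eq_mul, hEe, hβdef]
      have step1 : Matrix.vecMul μ (p ^ (k + 1)) s
          = α * e s + β * ∑ i, Matrix.vecMul μ (p ^ k) i * M i s := by
        rw [pow_succ, ← Matrix.vecMul_vecMul, vecMul_apply']
        calc ∑ i, Matrix.vecMul μ (p ^ k) i * p i s
            = ∑ i, (Matrix.vecMul μ (p ^ k) i * (α * e s)
                + β * (Matrix.vecMul μ (p ^ k) i * M i s)) := by
              apply Finset.sum_congr rfl; intro i _; rw [hps i]; ring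
          _ = (∑ i, Matrix.vecMul μ (p ^ k) i) * (α * e s)
                + β * ∑ i, Matrix.vecMul μ (p ^ k) i * M i s := by
              rw [Finset.sum_add_distrib, ← Finset.sum_mul, ← Finset.mul_sum]
          _ = α * e s + β * ∑ i, Matrix.vecMul μ (p ^ k) i * M i s := by
              rw [hdist.2]; ring
      have step2 : ∑ i, Matrix.vecMul μ (p ^ k) i * M i s
          = (∑ t ∈ Finset.range k, α * β ^ t * Matrix.vecMul e (M ^ (t + 1)) s)
            + β ^ k * Matrix.vecMul μ (M ^ (k + 1)) s := by
        calc ∑ i, Matrix.vecMul μ (p ^ k) i * M i s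
            = ∑ i, ((∑ t ∈ Finset.range k, α * β ^ t * (Matrix.vecMul e (M ^ t) i * M i s))
                + β ^ k * (Matrix.vecMul μ (M ^ k) i * M i s)) := by
              apply Finset.sum_congr rfl; intro i _; rw [ih i]
              rw [add_mul, Finset.sum_mul]
              congr 1
              · apply Finset.sum_congr rfl; intro t _; ring
              · ring
          _ = (∑ t ∈ Finset.range k, α * β ^ t * ∑ i, Matrix.vecMul e (M ^ t) i * M i s)
                + β ^ k * ∑ i, Matrix.vecMul μ (M ^ k) i * M i s := by
              rw [Finset.sum_add_distrib, Finset.sum_comm, ← Finset.mul_sum]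
              congr 1
              apply Finset.sum_congr rfl; intro t _; rw [Finset.mul_sum]
          _ = (∑ t ∈ Finset.range k, α * β ^ t * Matrix.vecMul e (M ^ (t + 1)) s)
                + β ^ k * Matrix.vecMul μ (M ^ (k + 1)) s := by
              congr 1
              · apply Finset.sum_congr rfl; intro t _
                rw [pow_succ, ← Matrix.vecMul_vecMul, vecMul_apply']
              · rw [pow_succ, ← Matrix.vecMul_vecMul, vecMul_apply']
      rw [step1, step2, Finset.sum_range_succ']
      simp only [pow_zero, mul_one, one_mul, Matrix.vecMul_one]
      rw [mul_add, Finset.mul_sum]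
      have hc : ∀ t ∈ Finset.range k,
          β * (α * β ^ t * Matrix.vecMul e (M ^ (t + 1)) s)
            = α * β ^ (t + 1) * Matrix.vecMul e (M ^ (t + 1)) s := by
        intro t _; ring
      rw [Finset.sum_congr rfl hc]
      ring
  -- geometric sums
  have geom : ∀ k : ℕ, ∑ t ∈ Finset.range k, α * β ^ t = 1 - β ^ k := by
    intro k
    induction k with
    | zero => simp
    | succ k ih =>
      rw [Finset.sum_range_succ, ih, pow_succ]
      linear_combination (β ^ k) * hαβ
  have hmn : m + 1 ≤ n := hn
  -- decomposition of the difference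
  have hdiff : ∀ s, Matrix.vecMul μ (p ^ n) s
      - ∑ t ∈ Finset.range (m + 1), (α * β ^ t / Z) * Matrix.vecMul e (M ^ t) s
      = (∑ t ∈ Finset.range (m + 1), (α * β ^ t - α * β ^ t / Z) * Matrix.vecMul e (M ^ t) s)
        + (∑ t ∈ Finset.Ico (m + 1) n, α * β ^ t * Matrix.vecMul e (M ^ t) s)
        + β ^ n * Matrix.vecMul μ (M ^ n) s := by
    intro s
    rw [key n]
    have hsplit : ∑ t ∈ Finset.range n, α * β ^ t * Matrix.vecMul e (M ^ t) s
        = (∑ t ∈ Finset.range (m + 1), α * β ^ t * Matrix.vecMul e (M ^ t) s)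
          + ∑ t ∈ Finset.Ico (m + 1) n, α * β ^ t * Matrix.vecMul e (M ^ t) s := by
      rw [Finset.range_eq_Ico, ← Finset.sum_Ico_consecutive _ (Nat.zero_le (m + 1)) hmn, Finset.range_eq_Ico]
    have hcomb : ∑ t ∈ Finset.range (m + 1),
          (α * β ^ t - α * β ^ t / Z) * Matrix.vecMul e (M ^ t) s
        = (∑ t ∈ Finset.range (m + 1), α * β ^ t * Matrix.vecMul e (M ^ t) s)
          - ∑ t ∈ Finset.range (m + 1), (α * β ^ t / Z) * Matrix.vecMul e (M ^ t) s := by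
      rw [← Finset.sum_sub_distrib]
      apply Finset.sum_congr rfl; intro t _; ring
    rw [hsplit, hcomb]; ring
  -- pointwise bound on the absolute value
  have hcoef : ∀ t : ℕ, α * β ^ t - α * β ^ t / Z ≤ 0 := by
    intro t
    have h1 : 0 ≤ α * β ^ t := mul_nonneg hα0.le (pow_nonneg hβ0 t)
    have h2 : α * β ^ t * Z ≤ α * β ^ t := mul_le_of_le_one_right h1 hZ1
    have h3 : α * β ^ t ≤ α * β ^ t / Z := (le_div_iff₀ hZ0).mpr h2
    linarith
  have habs : ∀ s, |Matrix.vecMul μ (p ^ n) s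
        - ∑ t ∈ Finset.range (m + 1), (α * β ^ t / Z) * Matrix.vecMul e (M ^ t) s|
      ≤ (∑ t ∈ Finset.range (m + 1), (α * β ^ t / Z - α * β ^ t) * Matrix.vecMul e (M ^ t) s)
        + (∑ t ∈ Finset.Ico (m + 1) n, α * β ^ t * Matrix.vecMul e (M ^ t) s)
        + β ^ n * Matrix.vecMul μ (M ^ n) s := by
    intro s
    rw [hdiff s]
    set A := ∑ t ∈ Finset.range (m + 1),
      (α * β ^ t - α * β ^ t / Z) * Matrix.vecMul e (M ^ t) s with hAdef
    set B := ∑ t ∈ Finset.Ico (m + 1) n, α * β ^ t * Matrix.vecMul e (M ^ t) s with hBdef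
    set C := β ^ n * Matrix.vecMul μ (M ^ n) s with hCdef
    have hApos : |A| = ∑ t ∈ Finset.range (m + 1),
        (α * β ^ t / Z - α * β ^ t) * Matrix.vecMul e (M ^ t) s := by
      rw [hAdef, abs_of_nonpos (Finset.sum_nonpos fun t _ =>
        mul_nonpos_iff.mpr (Or.inr ⟨hcoef t, (hf t).1 s⟩))]
      rw [← Finset.sum_neg_distrib]
      apply Finset.sum_congr rfl; intro t _; ring
    have hB0 : 0 ≤ B := Finset.sum_nonneg fun t _ =>
      mul_nonneg (mul_nonneg hα0.le (pow_nonneg hβ0 t)) ((hf t).1 s)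
    have hC0 : 0 ≤ C := mul_nonneg (pow_nonneg hβ0 n) ((hg n).1 s)
    calc |A + B + C| ≤ |A + B| + |C| := abs_add_le _ _
      _ ≤ |A| + |B| + |C| := by linarith [abs_add_le A B]
      _ = _ := by rw [hApos, abs_of_nonneg hB0, abs_of_nonneg hC0]
  -- sum the bound over s
  have hsum_bound : ∑ s, |Matrix.vecMul μ (p ^ n) s
        - ∑ t ∈ Finset.range (m + 1), (α * β ^ t / Z) * Matrix.vecMul e (M ^ t) s|
      ≤ 2 * β ^ (m + 1) := by
    calc ∑ s, |Matrix.vecMul μ (p ^ n) s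
          - ∑ t ∈ Finset.range (m + 1), (α * β ^ t / Z) * Matrix.vecMul e (M ^ t) s|
        ≤ ∑ s, ((∑ t ∈ Finset.range (m + 1),
              (α * β ^ t / Z - α * β ^ t) * Matrix.vecMul e (M ^ t) s)
            + (∑ t ∈ Finset.Ico (m + 1) n, α * β ^ t * Matrix.vecMul e (M ^ t) s)
            + β ^ n * Matrix.vecMul μ (M ^ n) s) :=
          Finset.sum_le_sum fun s _ => habs s
      _ = (∑ t ∈ Finset.range (m + 1), (α * β ^ t / Z - α * β ^ t))
            + (∑ t ∈ Finset.Ico (m + 1) n, α * β ^ t) + β ^ n := by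
          rw [Finset.sum_add_distrib, Finset.sum_add_distrib]
          congr 1
          · congr 1
            · rw [Finset.sum_comm]
              apply Finset.sum_congr rfl; intro t _
              rw [← Finset.mul_sum, (hf t).2, mul_one]
            · rw [Finset.sum_comm]
              apply Finset.sum_congr rfl; intro t _
              rw [← Finset.mul_sum, (hf t).2, mul_one]
          · rw [← Finset.mul_sum, (hg n).2, mul_one]
      _ = 2 * β ^ (m + 1) := by
          have e1 : ∑ t ∈ Finset.range (m + 1), (α * β ^ t / Z - α * β ^ t)
              = β ^ (m + 1) := by
            rw [Finset.sum_sub_distrib, ← Finset.sum_div, geom (m + 1), ← hZdef,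
              div_self (ne_of_gt hZ0), hZdef]
            ring
          have e2 : ∑ t ∈ Finset.Ico (m + 1) n, α * β ^ t = β ^ (m + 1) - β ^ n := by
            rw [Finset.sum_Ico_eq_sub _ hmn, geom, geom]; ring
          rw [e1, e2]; ring
  calc (1 / 2 : ℝ) * ∑ s, |Matrix.vecMul μ (p ^ n) s
        - ∑ t ∈ Finset.range (m + 1), (α * β ^ t / Z) * Matrix.vecMul e (M ^ t) s|
      ≤ (1 / 2) * (2 * β ^ (m + 1)) := by
        apply mul_le_mul_of_nonneg_left hsum_bound (by norm_num)
    _ = β ^ (m + 1) := by ring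
end
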